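/- Let X be a nonempty finite type and ⊵ an irreflexive relation on X. Let p : X × X → ℝ≥0 satisfy Σ_{(x,x')} p(x,x') = 1 and p(a,b) = 0 for every pair with a ⊵ b. Then there exists a ⊵-submonotone distribution h over latent preference types with p_h = p; that is, every admissible distribution over instrument-response types is rationalized by submonotone latent preferences. -/

import Mathlib

open scoped NNReal

/-- A latent preference type on `X`: a pair of strict preferences (strict total orders),
the unit's preferences at the two values of a binary instrument. -/
def LatentPref (X : Type*) : Type _ :=
  {pr : (X → X → Prop) × (X → X → Prop) //
    IsStrictTotalOrder X pr.1 ∧ IsStrictTotalOrder X pr.2}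

/-- A pair of preferences `(r₀, r₁)` is `⊵`-submonotone (no preference reversals against
the relation `tr`): whenever `tr a b` and `a` is `r₀`-preferred to `b`, `a` remains
`r₁`-preferred to `b`. -/
def SubmonoPair {X : Type*} (tr : X → X → Prop)
    (pr : (X → X → Prop) × (X → X → Prop)) : Prop :=
  ∀ a b : X, tr a b → pr.1 a b → pr.2 a b

/-- `m` is the greatest element of the strict preference `r` (the rational choice). -/
def GreatestElem {X : Type*} (r : X → X → Prop) (m : X) : Prop :=
  ∀ x : X, x ≠ m → r m x

/-- A distribution over latent preference types: nonnegative weights of total mass one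
(the set of latent preference types over a finite `X` is finite). -/
def IsPrefDist {X : Type*} (h : LatentPref X → ℝ≥0) : Prop :=
  ∑ᶠ pr : LatentPref X, h pr = 1

/-- A `⊵`-submonotone distribution over latent preference types: a distribution that
vanishes on every pair of preferences that is not `⊵`-submonotone. -/
def SubmonoDist {X : Type*} (tr : X → X → Prop) (h : LatentPref X → ℝ≥0) : Prop :=
  IsPrefDist h ∧ ∀ pr : LatentPref X, ¬ SubmonoPair tr pr.1 → h pr = 0

/-- The distribution over instrument-response types induced by a distribution over latent
preference types: `inducedIR h x x'` is the total weight of latent preference types whose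
first preference has greatest element `x` and whose second has greatest element `x'`. -/
noncomputable def inducedIR {X : Type*} (h : LatentPref X → ℝ≥0) (x x' : X) : ℝ≥0 :=
  ∑ᶠ (pr : LatentPref X)
    (_ : GreatestElem pr.1.1 x ∧ GreatestElem pr.1.2 x'), h pr

section Aux

variable {X : Type*} [Fintype X] [Nonempty X]

instance : Finite (LatentPref X) := by
  unfold LatentPref; exact Subtype.finite

noncomputable instance : Fintype (LatentPref X) := Fintype.ofFinite _

open Classical in
/-- A rank function putting `x` first, `y` second, the rest in a fixed order. -/
noncomputable def akey (x y a : X) : ℕ :=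
  if a = x then 0 else if a = y then 1 else (Fintype.equivFin X a : ℕ) + 2

lemma akey_inj (x y : X) : Function.Injective (akey x y) := by
  classical
  intro a b h
  rcases eq_or_ne a b with rfl | hne
  · rfl
  exfalso
  unfold akey at h
  split_ifs at h <;> try omega
  all_goals first
    | (subst_vars; exact hne rfl)
    | (exact hne ((Fintype.equivFin X).injective (Fin.ext (by omega))))

/-- Strict preference determined by the rank function `akey x y`. -/
noncomputable def prel (x y : X) (a b : X) : Prop := akey x y a < akey x y b

lemma prel_sto (x y : X) : IsStrictTotalOrder X (prel x y) :=
  { trichotomous := by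
      intro a b
      rcases eq_or_ne a b with rfl | h
      · exact fun _ _ => rfl
      rcases Nat.lt_trichotomy (akey x y a) (akey x y b) with h1 | h1 | h1
      · exact fun h2 _ => absurd h1 h2
      · exact absurd (akey_inj x y h1) h
      · exact fun _ h2 => absurd h1 h2
    irrefl := fun a => lt_irrefl _
    trans := fun a b c => Nat.lt_trans }

noncomputable def makePref (x y : X) : LatentPref X :=
  ⟨(prel x y, prel y x), prel_sto x y, prel_sto y x⟩

lemma akey_self (x y : X) : akey x y x = 0 := by simp [akey]

lemma akey_pos (x y a : X) (h : a ≠ x) : 0 < akey x y a := by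
  classical
  unfold akey; rw [if_neg h]; split_ifs <;> omega

lemma greatest_prel (x y : X) : GreatestElem (prel x y) x := by
  intro a ha
  show akey x y x < akey x y a
  rw [akey_self]
  exact akey_pos _ _ _ ha

lemma greatest_prel_unique (x y m : X) (h : GreatestElem (prel x y) m) : m = x := by
  by_contra hm
  have h1 : prel x y m x := h x (Ne.symm hm)
  have h2 := akey_self x y
  have h3 := akey_pos x y m hm
  unfold prel at h1
  omega

lemma submono_makePref (tr : X → X → Prop) (hirr : ∀ a : X, ¬ tr a a)
    (x y : X) (hxy : ¬ tr x y) : SubmonoPair tr (makePref x y).1 := by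
  classical
  intro a b htr hab
  have hne : a ≠ b := fun e => hirr a (e ▸ htr)
  change prel x y a b at hab
  show prel y x a b
  unfold prel akey at hab ⊢
  by_cases hax : a = x <;> by_cases hay : a = y <;> by_cases hbx : b = x <;>
    by_cases hby : b = y <;> subst_vars <;> (try simp_all) <;> omega

open Classical in
noncomputable def pickPref (tr : X → X → Prop) (q : X × X) : LatentPref X :=
  if tr q.1 q.2 then makePref q.1 q.1 else makePref q.1 q.2

lemma submono_pickPref (tr : X → X → Prop) (hirr : ∀ a : X, ¬ tr a a) (q : X × X) :
    SubmonoPair tr (pickPref tr q).1 := by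
  classical
  unfold pickPref
  split_ifs with h
  · exact submono_makePref tr hirr _ _ (hirr q.1)
  · exact submono_makePref tr hirr _ _ h

lemma pickPref_tops (tr : X → X → Prop) (q : X × X) (hq : ¬ tr q.1 q.2) (x x' : X)
    (h : GreatestElem (pickPref tr q).1.1 x ∧ GreatestElem (pickPref tr q).1.2 x') :
    q = (x, x') := by
  classical
  unfold pickPref at h
  rw [if_neg hq] at h
  obtain ⟨h1, h2⟩ := h
  have e1 := greatest_prel_unique q.1 q.2 x h1
  have e2 := greatest_prel_unique q.2 q.1 x' h2
  rw [e1, e2]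

end Aux

/-- For an irreflexive relation `⊵`, every distribution over
instrument-response types that vanishes on the pairs ruled out by `⊵` is rationalized by a
`⊵`-submonotone distribution over latent preference types. -/
theorem admissible_rationalized_by_submonotone
    {X : Type*} [Fintype X] [Nonempty X]
    (tr : X → X → Prop) (hirr : ∀ a : X, ¬ tr a a)
    (p : X × X → ℝ≥0) (hsum : ∑ q : X × X, p q = 1)
    (hzero : ∀ a b : X, tr a b → p (a, b) = 0) :
    ∃ h : LatentPref X → ℝ≥0, SubmonoDist tr h ∧
      ∀ x x' : X, inducedIR h x x' = p (x, x') := by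
  classical
  set F : X × X → LatentPref X := pickPref tr with hF
  set h : LatentPref X → ℝ≥0 :=
    fun pr => ∑ q : X × X, if F q = pr then p q else 0 with hh
  have hsum1 : ∑ᶠ pr : LatentPref X, h pr = 1 := by
    rw [finsum_eq_sum_of_fintype]
    calc ∑ pr : LatentPref X, ∑ q : X × X, (if F q = pr then p q else 0)
        = ∑ q : X × X, ∑ pr : LatentPref X, (if F q = pr then p q else 0) :=
          Finset.sum_comm
      _ = ∑ q : X × X, p q := by
          refine Finset.sum_congr rfl fun q _ => ?_
          rw [Finset.sum_ite_eq]
          exact if_pos (Finset.mem_univ _)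
      _ = 1 := hsum
  refine ⟨h, ⟨hsum1, ?_⟩, ?_⟩
  · intro pr hnpr
    refine Finset.sum_eq_zero fun q _ => ?_
    rw [if_neg]
    intro he
    exact hnpr (he ▸ submono_pickPref tr hirr q)
  · intro x x'
    unfold inducedIR
    set C : LatentPref X → Prop :=
      fun pr => GreatestElem pr.1.1 x ∧ GreatestElem pr.1.2 x' with hC
    have step1 : ∀ pr : LatentPref X, (∑ᶠ _ : C pr, h pr) = if C pr then h pr else 0 :=
      fun pr => finsum_eq_if
    rw [finsum_congr step1, finsum_eq_sum_of_fintype]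
    have step2 : ∑ pr : LatentPref X, (if C pr then h pr else 0)
        = ∑ q : X × X, (if C (F q) then p q else 0) := by
      calc ∑ pr : LatentPref X, (if C pr then h pr else 0)
          = ∑ pr : LatentPref X, ∑ q : X × X,
              (if C pr ∧ F q = pr then p q else 0) := by
            refine Finset.sum_congr rfl fun pr _ => ?_
            by_cases hc : C pr
            · rw [if_pos hc]
              exact Finset.sum_congr rfl fun q _ =>
                (if_congr (and_iff_right hc) rfl rfl).symm
            · rw [if_neg hc]
              exact (Finset.sum_eq_zero fun q _ => if_neg fun h2 => hc h2.1).symm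
        _ = ∑ q : X × X, ∑ pr : LatentPref X,
              (if C pr ∧ F q = pr then p q else 0) := Finset.sum_comm
        _ = ∑ q : X × X, (if C (F q) then p q else 0) := by
            refine Finset.sum_congr rfl fun q _ => ?_
            rw [Finset.sum_eq_single_of_mem (F q) (Finset.mem_univ _)]
            · exact if_congr (and_iff_left rfl) rfl rfl
            · intro pr _ hne
              rw [if_neg]
              rintro ⟨-, rfl⟩
              exact hne rfl
    rw [step2]
    rw [Finset.sum_eq_single_of_mem (x, x') (Finset.mem_univ _)]
    · by_cases htr : tr x x'
      · rw [hzero x x' htr]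
        simp
      · rw [if_pos]
        show C (pickPref tr (x, x'))
        unfold pickPref
        rw [if_neg htr]
        exact ⟨greatest_prel x x', greatest_prel x' x⟩
    · intro q _ hne
      by_cases hc : C (F q)
      · rw [if_pos hc]
        by_cases hq : tr q.1 q.2
        · have : q = (q.1, q.2) := rfl
          rw [this]
          exact hzero q.1 q.2 hq
        · exact absurd (pickPref_tops tr q hq x x' hc) hne
      · exact if_neg hc
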